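/- Let (Ω,𝒜,μ) be a probability space and χ:Ω→[0,∞) measurable with μ(χ>x)=L(x)/x^α for all x>0, where L is slowly varying and 0<α<1. Let (b_n) be a sequence of natural numbers tending to infinity with b_n=o(n), put ζ_n := b_n^{2/3} and g_n := F^←(1−(b_n−ζ_n)/n). Then 1−F(g_n) ∼ b_n/n as n→∞, i.e. lim_{n→∞} n·(1−F(g_n))/b_n = 1. -/

import Mathlib

open MeasureTheory Filter Topology ENNReal

noncomputable section

/-- Birkhoff sum `S_n χ = ∑_{k=1}^n χ ∘ T^{k-1}`. -/
def birkhoffSumN {Ω : Type*} (T : Ω → Ω) (χ : Ω → ℝ) (n : ℕ) (ω : Ω) : ℝ :=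
  ∑ k ∈ Finset.range n, χ (T^[k] ω)

/-- Trimmed sum `S_n^b χ`: the sum of the `n - b` smallest values among
`χ(ω), χ(Tω), …, χ(T^{n-1}ω)`. -/
def trimmedSumN {Ω : Type*} (T : Ω → Ω) (χ : Ω → ℝ) (n b : ℕ) (ω : Ω) : ℝ :=
  (((((List.range n).map fun k => χ (T^[k] ω))).mergeSort (fun a b => a ≤ b)).take (n - b)).sum

/-- Truncated sum `T_n^f χ = ∑_{k=1}^n (χ·1_{χ ≤ f}) ∘ T^{k-1}`. -/
def truncSumN {Ω : Type*} (T : Ω → Ω) (χ : Ω → ℝ) (n : ℕ) (f : ℝ) (ω : Ω) : ℝ :=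
  ∑ k ∈ Finset.range n, if χ (T^[k] ω) ≤ f then χ (T^[k] ω) else 0

/-- A function `L` is slowly varying if `L(cx)/L(x) → 1` as `x → ∞`, for every `c > 0`. -/
def SlowlyVarying (L : ℝ → ℝ) : Prop :=
  ∀ c : ℝ, 0 < c → Tendsto (fun x => L (c * x) / L x) atTop (𝓝 1)

/-- `ls` is a de Bruijn conjugate of the slowly varying function `Lt`. -/
def IsDeBruijnConjugate (Lt ls : ℝ → ℝ) : Prop :=
  SlowlyVarying ls ∧
  Tendsto (fun x => Lt x * ls (x * Lt x)) atTop (𝓝 1) ∧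
  Tendsto (fun x => ls x * Lt (x * ls x)) atTop (𝓝 1)

/-- The measure of dependence `ψ(ℬ,𝒞)` between two sub-σ-fields. -/
def psiDep {Ω : Type*} [MeasurableSpace Ω] (μ : Measure Ω)
    (B C : MeasurableSpace Ω) : ℝ≥0∞ :=
  ⨆ (b : Set Ω) (c : Set Ω) (_ : MeasurableSet[B] b) (_ : MeasurableSet[C] c)
    (_ : 0 < μ b) (_ : 0 < μ c),
    ENNReal.ofReal |(μ (b ∩ c)).toReal / ((μ b).toReal * (μ c).toReal) - 1|

/-- The σ-field generated by `X_k = χ ∘ T^{k-1}` for `J ≤ k ≤ L`. -/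
def sigmaIcc {Ω : Type*} [MeasurableSpace Ω] (T : Ω → Ω) (χ : Ω → ℝ) (J L : ℕ) :
    MeasurableSpace Ω :=
  ⨆ k ∈ Set.Icc J L, MeasurableSpace.comap (fun ω => χ (T^[k - 1] ω)) inferInstance

/-- The σ-field generated by `X_k = χ ∘ T^{k-1}` for `k ≥ J`. -/
def sigmaIci {Ω : Type*} [MeasurableSpace Ω] (T : Ω → Ω) (χ : Ω → ℝ) (J : ℕ) :
    MeasurableSpace Ω :=
  ⨆ k ∈ Set.Ici J, MeasurableSpace.comap (fun ω => χ (T^[k - 1] ω)) inferInstance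

/-- The `n`-th ψ-mixing coefficient of the sequence `(χ ∘ T^{k-1})_{k ≥ 1}`. -/
def psiCoeff {Ω : Type*} [MeasurableSpace Ω] (μ : Measure Ω) (T : Ω → Ω) (χ : Ω → ℝ)
    (n : ℕ) : ℝ≥0∞ :=
  ⨆ (k : ℕ) (_ : 1 ≤ k), psiDep μ (sigmaIcc T χ 1 k) (sigmaIci T χ (k + n))

/-- A bounded operator `U` has a spectral gap: `U = λ·P + N` with `P` a one-dimensional
projection, `ρ(N) < |λ|`, and `PN = NP = 0`. -/
def HasSpectralGap {F : Type*} [NormedAddCommGroup F] [NormedSpace ℝ F] [CompleteSpace F]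
    (U : F →L[ℝ] F) : Prop :=
  ∃ (lam : ℝ) (P N : F →L[ℝ] F),
    U = lam • P + N ∧ P.comp P = P ∧
    Module.finrank ℝ (LinearMap.range (P : F →ₗ[ℝ] F)) = 1 ∧
    spectralRadius ℝ N < ENNReal.ofReal |lam| ∧
    P.comp N = 0 ∧ N.comp P = 0

/-- Property ℭ: `μ` is a `T`-invariant mixing probability measure, `ℱ` (realized as a Banach
algebra `F` of measurable functions via the injective algebra homomorphism `ι`) contains the
constants, dominates the sup norm, and the transfer operator restricts to a bounded operator
on `F` with a spectral gap. -/
structure PropertyC {Ω : Type*} [MeasurableSpace Ω] (T : Ω → Ω) (μ : Measure Ω)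
    {F : Type*} [NormedRing F] [NormedAlgebra ℝ F] [CompleteSpace F]
    (ι : F →ₐ[ℝ] Ω → ℝ) : Prop where
  prob : IsProbabilityMeasure μ
  invariant : MeasurePreserving T μ μ
  mixing : ∀ A B : Set Ω, MeasurableSet A → MeasurableSet B →
    Tendsto (fun n => μ (A ∩ T^[n] ⁻¹' B)) atTop (𝓝 (μ A * μ B))
  inj : Function.Injective ι
  measurable_mem : ∀ f : F, Measurable (ι f)
  norm_ge_sup : ∀ (f : F) (ω : Ω), |ι f ω| ≤ ‖f‖
  transfer : ∃ That : F →L[ℝ] F,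
    (∀ (f : F) (g : Ω → ℝ), Measurable g → (∃ C, ∀ ω, |g ω| ≤ C) →
      ∫ ω, ι (That f) ω * g ω ∂μ = ∫ ω, ι f ω * g (T ω) ∂μ) ∧
    HasSpectralGap That

/-- Property 𝔇: Property ℭ together with the norm control on truncations of the
nonnegative observable `χ`. -/
structure PropertyD {Ω : Type*} [MeasurableSpace Ω] (T : Ω → Ω) (μ : Measure Ω)
    {F : Type*} [NormedRing F] [NormedAlgebra ℝ F] [CompleteSpace F]
    (ι : F →ₐ[ℝ] Ω → ℝ) (χ : Ω → ℝ) extends PropertyC T μ ι : Prop where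
  chi_nonneg : ∀ ω, 0 ≤ χ ω
  chi_meas : Measurable χ
  norm_bound : ∃ K₁ > (0 : ℝ), ∀ ℓ : ℝ, 0 ≤ ℓ →
    (∃ f : F, ι f = (fun ω => if χ ω ≤ ℓ then χ ω else 0) ∧ ‖f‖ ≤ K₁ * ℓ) ∧
    (∃ g : F, ι g = (fun ω => if ℓ < χ ω then (1 : ℝ) else 0) ∧ ‖g‖ ≤ K₁)

/-- The distribution function `F(x) = μ(χ ≤ x)`. -/
def distF {Ω : Type*} [MeasurableSpace Ω] (μ : Measure Ω) (χ : Ω → ℝ) (x : ℝ) : ℝ :=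
  (μ {ω | χ ω ≤ x}).toReal

/-- Generalized inverse `F^←(y) = inf {x | F(x) ≥ y}`. -/
def genInv (F : ℝ → ℝ) (y : ℝ) : ℝ := sInf {x : ℝ | y ≤ F x}

/-- `g_n = F^←(1 - (b_n - ζ_n)/n)` where `ζ_n = b_n^{2/3}`. -/
def gSeq {Ω : Type*} [MeasurableSpace Ω] (μ : Measure Ω) (χ : Ω → ℝ) (b : ℕ → ℕ)
    (n : ℕ) : ℝ :=
  genInv (distF μ χ) (1 - ((b n : ℝ) - (b n : ℝ) ^ ((2 : ℝ) / 3)) / n)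

/-- The norming sequence `d_n = (α/(1-α))·n^{1/α}·b_n^{1-1/α}·ℓ^#((n/b_n)^{1/α})`. -/
def dSeq (α : ℝ) (ls : ℝ → ℝ) (b : ℕ → ℕ) (n : ℕ) : ℝ :=
  α / (1 - α) * (n : ℝ) ^ (1 / α) * (b n : ℝ) ^ (1 - 1 / α) *
    ls (((n : ℝ) / (b n : ℝ)) ^ (1 / α))

end

theorem tail_at_gn_asymptotic
    {Ω : Type*} [MeasurableSpace Ω] (μ : Measure Ω) [IsProbabilityMeasure μ]
    (χ : Ω → ℝ) (hχm : Measurable χ) (hχ0 : ∀ ω, 0 ≤ χ ω)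
    (L : ℝ → ℝ) (hL : SlowlyVarying L) (hLpos : ∀ x : ℝ, 0 < x → 0 < L x)
    {α : ℝ} (hα0 : 0 < α) (hα1 : α < 1)
    (htail : ∀ x : ℝ, 0 < x → (μ {ω | x < χ ω}).toReal = L x / x ^ α)
    (b : ℕ → ℕ) (hb : Tendsto b atTop atTop)
    (hbo : Tendsto (fun n => (b n : ℝ) / (n : ℝ)) atTop (𝓝 0))
    :
    Tendsto (fun n : ℕ => (n : ℝ) * (1 - distF μ χ (gSeq μ χ b n)) / (b n : ℝ))
      atTop (𝓝 1) := by

  classical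
  set F := distF μ χ with hFdef
  set g := gSeq μ χ b with hgsdef
  set β : ℕ → ℝ := fun n => ((b n : ℝ) - (b n : ℝ) ^ ((2 : ℝ) / 3)) / (n : ℝ) with hβdef
  have hgdef : ∀ n, g n = sInf {x : ℝ | 1 - β n ≤ F x} := fun n => rfl
  -- basic facts about F
  have hF0 : ∀ x : ℝ, 0 ≤ F x := fun x => ENNReal.toReal_nonneg
  have hFmono : Monotone F := by
    intro a c hac
    exact ENNReal.toReal_mono (measure_ne_top μ _)
      (measure_mono (fun ω hω => le_trans hω hac))
  have h1 : ∀ x : ℝ, 0 < x → 1 - F x = L x / x ^ α := by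
    intro x hx
    have hs : MeasurableSet {ω | χ ω ≤ x} := hχm measurableSet_Iic
    have hadd : μ {ω | χ ω ≤ x} + μ {ω | χ ω ≤ x}ᶜ = 1 := by
      rw [measure_add_measure_compl hs, measure_univ]
    have hceq : {ω | χ ω ≤ x}ᶜ = {ω | x < χ ω} := by ext ω; simp [not_le]
    have htr : (μ {ω | χ ω ≤ x}).toReal + (μ {ω | x < χ ω}).toReal = 1 := by
      rw [← hceq, ← ENNReal.toReal_add (measure_ne_top μ _) (measure_ne_top μ _), hadd,
        ENNReal.toReal_one]
    have ht := htail x hx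
    have : F x = (μ {ω | χ ω ≤ x}).toReal := rfl
    rw [this]
    linarith
  have htpos : ∀ x : ℝ, 0 < x → 0 < L x / x ^ α := fun x hx =>
    div_pos (hLpos x hx) (Real.rpow_pos_of_pos hx α)
  have hFlt1 : ∀ x : ℝ, 0 < x → F x < 1 := by
    intro x hx
    have := h1 x hx
    have := htpos x hx
    linarith
  have hFneg : ∀ x : ℝ, x < 0 → F x = 0 := by
    intro x hx
    have : {ω | χ ω ≤ x} = (∅ : Set Ω) := by
      ext ω; simp only [Set.mem_setOf_eq, Set.mem_empty_iff_false, iff_false, not_le]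
      exact lt_of_lt_of_le hx (hχ0 ω)
    have : F x = (μ (∅ : Set Ω)).toReal := by rw [hFdef, distF, this]
    simp [this]
  have hexists : ∀ y : ℝ, y < 1 → ∃ x : ℝ, y ≤ F x := by
    intro y hy
    rcases le_or_gt y 0 with h | h
    · exact ⟨0, h.trans (hF0 0)⟩
    · have hmono : Monotone (fun k : ℕ => {ω | χ ω ≤ (k : ℝ)}) := by
        intro i j hij ω hω
        simp only [Set.mem_setOf_eq] at hω ⊢
        exact le_trans hω (by exact_mod_cast hij)
      have hun : (⋃ k : ℕ, {ω | χ ω ≤ (k : ℝ)}) = Set.univ := by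
        ext ω
        simp only [Set.mem_iUnion, Set.mem_setOf_eq, Set.mem_univ, iff_true]
        exact exists_nat_ge (χ ω)
      have ht := tendsto_measure_iUnion_atTop (μ := μ) hmono
      rw [hun, measure_univ] at ht
      have hev : ∀ᶠ k : ℕ in atTop, ENNReal.ofReal y < μ {ω | χ ω ≤ (k : ℝ)} :=
        ht.eventually_const_lt (ENNReal.ofReal_lt_one.2 hy)
      obtain ⟨k, hk⟩ := hev.exists
      refine ⟨k, ?_⟩
      have := (ENNReal.ofReal_le_iff_le_toReal (measure_ne_top μ _)).1 hk.le
      exact this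
  -- coercions
  have hbR : Tendsto (fun n => (b n : ℝ)) atTop atTop :=
    tendsto_natCast_atTop_atTop.comp hb
  have hnR : Tendsto (fun n : ℕ => (n : ℝ)) atTop atTop := tendsto_natCast_atTop_atTop
  -- eventual facts about β
  have E2 : ∀ᶠ n in atTop, 0 < β n := by
    filter_upwards [hbR.eventually_ge_atTop 2, hnR.eventually_ge_atTop 1] with n h2 hn1
    have hlt : (b n : ℝ) ^ ((2 : ℝ) / 3) < (b n : ℝ) := by
      calc (b n : ℝ) ^ ((2 : ℝ) / 3) < (b n : ℝ) ^ (1 : ℝ) :=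
            Real.rpow_lt_rpow_of_exponent_lt (by linarith) (by norm_num)
        _ = (b n : ℝ) := Real.rpow_one _
    exact div_pos (by linarith) (by linarith)
  have E3 : ∀ᶠ n in atTop, β n ≤ (b n : ℝ) / (n : ℝ) := by
    filter_upwards [hnR.eventually_ge_atTop 1] with n hn1
    have hz : 0 ≤ (b n : ℝ) ^ ((2 : ℝ) / 3) := Real.rpow_nonneg (Nat.cast_nonneg _) _
    have hn0 : (0 : ℝ) < n := by linarith
    show ((b n : ℝ) - (b n : ℝ) ^ ((2 : ℝ) / 3)) / (n : ℝ) ≤ (b n : ℝ) / (n : ℝ)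
    have hz : (b n : ℝ) - (b n : ℝ) ^ ((2 : ℝ) / 3) ≤ (b n : ℝ) := by linarith
    exact div_le_div_of_nonneg_right hz hn0.le
  have hβ0 : Tendsto β atTop (𝓝 0) :=
    squeeze_zero' (E2.mono fun n h => h.le) E3 hbo
  have hy1 : Tendsto (fun n => 1 - β n) atTop (𝓝 1) := by
    simpa using tendsto_const_nhds.sub hβ0
  have E3' : ∀ᶠ n in atTop, β n < 1 := by
    filter_upwards [E3, hbo.eventually_lt_const one_pos] with n h3 hlt
    linarith
  -- g n → ∞
  have hgtop : Tendsto g atTop atTop := by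
    rw [tendsto_atTop]
    intro M
    have hM' : (0 : ℝ) < max M 1 := lt_of_lt_of_le one_pos (le_max_right _ _)
    have hF' := hFlt1 _ hM'
    filter_upwards [hy1.eventually_const_lt hF', E2] with n hev hβpos
    rw [hgdef n]
    have hne : {x : ℝ | 1 - β n ≤ F x}.Nonempty := hexists _ (by linarith)
    refine le_trans (le_max_left M 1) (le_csInf hne ?_)
    intro x hx
    by_contra hc
    push_neg at hc
    have : F x ≤ F (max M 1) := hFmono hc.le
    have hx' : 1 - β n ≤ F x := hx
    linarith
  -- the ratio β n * n / b n → 1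
  have hratio : Tendsto (fun n => β n * (n : ℝ) / (b n : ℝ)) atTop (𝓝 1) := by
    have hev : ∀ᶠ n in atTop,
        1 - (b n : ℝ) ^ (-(1 : ℝ) / 3) = β n * (n : ℝ) / (b n : ℝ) := by
      filter_upwards [hbR.eventually_gt_atTop 0, hnR.eventually_ge_atTop 1] with n hbn hn1
      have hn0 : (0 : ℝ) < n := by linarith
      have h1' : β n * (n : ℝ) = (b n : ℝ) - (b n : ℝ) ^ ((2 : ℝ) / 3) :=
        div_mul_cancel₀ _ (ne_of_gt hn0)
      rw [h1', sub_div, div_self (ne_of_gt hbn)]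
      congr 1
      rw [show (b n : ℝ) ^ ((2:ℝ)/3) / (b n : ℝ) = (b n : ℝ) ^ ((2:ℝ)/3) / (b n : ℝ) ^ (1:ℝ) by
        rw [Real.rpow_one], ← Real.rpow_sub hbn]
      norm_num
    have hpow : Tendsto (fun n => (b n : ℝ) ^ (-(1 : ℝ) / 3)) atTop (𝓝 0) := by
      have h := tendsto_rpow_neg_atTop (y := (1 : ℝ) / 3) (by norm_num)
      have := h.comp hbR
      simpa [Function.comp_def, neg_div] using this
    have : Tendsto (fun n => 1 - (b n : ℝ) ^ (-(1 : ℝ) / 3)) atTop (𝓝 1) := by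
      simpa using tendsto_const_nhds.sub hpow
    exact this.congr' hev
  -- the key ratio limit
  have key : ∀ c : ℝ, 0 < c →
      Tendsto (fun n => (L (g n) / (g n) ^ α) / (L (c * g n) / (c * g n) ^ α)
        * (β n * (n : ℝ) / (b n : ℝ))) atTop (𝓝 (c ^ α)) := by
    intro c hc
    have hLg : Tendsto (fun n => L (c * g n) / L (g n)) atTop (𝓝 1) := by
      have := (hL c hc).comp hgtop
      simpa [Function.comp_def] using this
    have hinv : Tendsto (fun n => (L (c * g n) / L (g n))⁻¹) atTop (𝓝 1) := by
      simpa using hLg.inv₀ one_ne_zero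
    have heq : ∀ᶠ n in atTop,
        c ^ α * (L (c * g n) / L (g n))⁻¹
          = (L (g n) / (g n) ^ α) / (L (c * g n) / (c * g n) ^ α) := by
      filter_upwards [hgtop.eventually_gt_atTop 0] with n hg
      have h1' : (0 : ℝ) < (g n) ^ α := Real.rpow_pos_of_pos hg α
      have h2' : 0 < L (g n) := hLpos _ hg
      have h3' : 0 < L (c * g n) := hLpos _ (mul_pos hc hg)
      rw [Real.mul_rpow hc.le hg.le, inv_div]
      field_simp
    have hmul : Tendsto (fun n => c ^ α * (L (c * g n) / L (g n))⁻¹) atTop (𝓝 (c ^ α)) := by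
      simpa using hinv.const_mul (c ^ α)
    have := (hmul.congr' heq).mul hratio
    simpa using this
  -- eventual upper bound
  have evU : ∀ δ : ℝ, 0 < δ → ∀ᶠ n : ℕ in atTop,
      (n : ℝ) * (1 - F (g n)) / (b n : ℝ)
        ≤ (L (g n) / (g n) ^ α) / (L ((1 + δ) * g n) / ((1 + δ) * g n) ^ α)
          * (β n * (n : ℝ) / (b n : ℝ)) := by
    intro δ hδ
    filter_upwards [hgtop.eventually_gt_atTop 0, E2, hbR.eventually_gt_atTop 0,
      hnR.eventually_ge_atTop 1] with n hg hβpos hbn hn1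
    have hn0 : (0 : ℝ) < n := by linarith
    have hgn1 : 0 < (1 + δ) * g n := mul_pos (by linarith) hg
    have hτ1 : 0 < L (g n) / (g n) ^ α := htpos _ hg
    have hτ2 : 0 < L ((1 + δ) * g n) / ((1 + δ) * g n) ^ α := htpos _ hgn1
    have hne : {x : ℝ | 1 - β n ≤ F x}.Nonempty := hexists _ (by linarith)
    have hlt : sInf {x : ℝ | 1 - β n ≤ F x} < (1 + δ) * g n := by
      rw [← hgdef]
      nlinarith
    obtain ⟨x, hxS, hxlt⟩ := exists_lt_of_csInf_lt hne hlt
    have hFx : 1 - β n ≤ F x := hxS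
    have hFgn := h1 _ hgn1
    have hτ2β : L ((1 + δ) * g n) / ((1 + δ) * g n) ^ α ≤ β n := by
      have hmo : F x ≤ F ((1 + δ) * g n) := hFmono hxlt.le
      linarith
    have h1g := h1 _ hg
    rw [show (1 : ℝ) - F (g n) = L (g n) / (g n) ^ α from h1g]
    have hτ : L (g n) / (g n) ^ α
        ≤ L (g n) / (g n) ^ α / (L ((1 + δ) * g n) / ((1 + δ) * g n) ^ α) * β n := by
      rw [div_mul_eq_mul_div, le_div_iff₀ hτ2]
      exact mul_le_mul_of_nonneg_left hτ2β hτ1.le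
    calc (n : ℝ) * (L (g n) / (g n) ^ α) / (b n : ℝ)
        ≤ (n : ℝ) * (L (g n) / (g n) ^ α / (L ((1 + δ) * g n) / ((1 + δ) * g n) ^ α) * β n)
            / (b n : ℝ) := by
          apply div_le_div_of_nonneg_right _ hbn.le
          exact mul_le_mul_of_nonneg_left hτ hn0.le
      _ = L (g n) / (g n) ^ α / (L ((1 + δ) * g n) / ((1 + δ) * g n) ^ α)
            * (β n * (n : ℝ) / (b n : ℝ)) := by ring
  -- eventual lower bound
  have evL : ∀ δ : ℝ, 0 < δ → δ < 1 → ∀ᶠ n : ℕ in atTop,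
      (L (g n) / (g n) ^ α) / (L ((1 - δ) * g n) / ((1 - δ) * g n) ^ α)
        * (β n * (n : ℝ) / (b n : ℝ))
        ≤ (n : ℝ) * (1 - F (g n)) / (b n : ℝ) := by
    intro δ hδ hδ1
    filter_upwards [hgtop.eventually_gt_atTop 0, E2, E3', hbR.eventually_gt_atTop 0,
      hnR.eventually_ge_atTop 1] with n hg hβpos hβ1 hbn hn1
    have hn0 : (0 : ℝ) < n := by linarith
    have hgn1 : 0 < (1 - δ) * g n := mul_pos (by linarith) hg
    have hτ1 : 0 < L (g n) / (g n) ^ α := htpos _ hg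
    have hτ2 : 0 < L ((1 - δ) * g n) / ((1 - δ) * g n) ^ α := htpos _ hgn1
    have hbdd : BddBelow {x : ℝ | 1 - β n ≤ F x} := by
      refine ⟨0, fun x hx => ?_⟩
      by_contra hc
      push_neg at hc
      have := hFneg x hc
      have hx' : 1 - β n ≤ F x := hx
      linarith
    have hnot : ¬ (1 - β n ≤ F ((1 - δ) * g n)) := by
      intro hmem
      have := csInf_le hbdd hmem
      rw [← hgdef] at this
      nlinarith
    push_neg at hnot
    have hFgn := h1 _ hgn1
    have hτ2β : β n ≤ L ((1 - δ) * g n) / ((1 - δ) * g n) ^ α := by linarith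
    have h1g := h1 _ hg
    rw [show (1 : ℝ) - F (g n) = L (g n) / (g n) ^ α from h1g]
    have hτ : L (g n) / (g n) ^ α / (L ((1 - δ) * g n) / ((1 - δ) * g n) ^ α) * β n
        ≤ L (g n) / (g n) ^ α := by
      rw [div_mul_eq_mul_div, div_le_iff₀ hτ2]
      exact mul_le_mul_of_nonneg_left hτ2β hτ1.le
    calc L (g n) / (g n) ^ α / (L ((1 - δ) * g n) / ((1 - δ) * g n) ^ α)
          * (β n * (n : ℝ) / (b n : ℝ))
        = (n : ℝ) * (L (g n) / (g n) ^ α / (L ((1 - δ) * g n) / ((1 - δ) * g n) ^ α) * β n)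
            / (b n : ℝ) := by ring
      _ ≤ (n : ℝ) * (L (g n) / (g n) ^ α) / (b n : ℝ) := by
          apply div_le_div_of_nonneg_right _ hbn.le
          exact mul_le_mul_of_nonneg_left hτ hn0.le
  -- final assembly
  rw [Metric.tendsto_nhds]
  intro ε hε
  set δ : ℝ := min (ε / 2) (1 / 2) with hδdef
  have hδ0 : 0 < δ := lt_min (by linarith) (by norm_num)
  have hδhalf : δ ≤ 1 / 2 := min_le_right _ _
  have hδε : δ ≤ ε / 2 := min_le_left _ _
  have hδ1 : δ < 1 := lt_of_le_of_lt hδhalf (by norm_num)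
  have hUlim := key (1 + δ) (by linarith)
  have hLlim := key (1 - δ) (by linarith)
  have hUbd : (1 + δ) ^ α < 1 + ε := by
    calc (1 + δ) ^ α ≤ (1 + δ) ^ (1 : ℝ) :=
          Real.rpow_le_rpow_of_exponent_le (by linarith) (by linarith)
      _ = 1 + δ := Real.rpow_one _
      _ < 1 + ε := by linarith
  have hLbd : 1 - ε < (1 - δ) ^ α := by
    calc (1 : ℝ) - ε < 1 - δ := by linarith
      _ = (1 - δ) ^ (1 : ℝ) := (Real.rpow_one _).symm
      _ ≤ (1 - δ) ^ α := Real.rpow_le_rpow_of_exponent_ge (by linarith) (by linarith)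
          (by linarith)
  filter_upwards [evU δ hδ0, evL δ hδ0 hδ1, hUlim.eventually_lt_const hUbd,
    hLlim.eventually_const_lt hLbd] with n h1' h2' h3' h4'
  rw [Real.dist_eq, abs_sub_lt_iff]
  constructor <;> linarith
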